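/- Let 𝒯 = (T, μ, η) be a monad on a category 𝔹. Then μ is an isomorphism if and only if the forgetful functor from the Eilenberg–Moore category of 𝒯-algebras to 𝔹 (CategoryTheory.Monad.forget) is full (it is always faithful, so this is equivalent to it being fully faithful). -/

import Mathlib

open CategoryTheory

/-- for a monad `𝒯 = (T, μ, η)` on a category `𝔹`, the multiplication
`μ` is an isomorphism if and only if the forgetful functor from the Eilenberg–Moore
category of `𝒯`-algebras to `𝔹` is full. -/
theorem stmt7 {𝔹 : Type*} [Category 𝔹] (T : Monad 𝔹) :
    IsIso T.μ ↔ T.forget.Full := by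
  constructor
  · intro h
    -- Tη = ηT, since both are right/left inverses of the iso μ
    have key : ∀ X : 𝔹, T.map (T.η.app X) = T.η.app (T.obj X) := by
      intro X
      have h1 : T.map (T.η.app X) ≫ T.μ.app X = 𝟙 _ := T.right_unit X
      have h2 : T.η.app (T.obj X) ≫ T.μ.app X = 𝟙 _ := T.left_unit X
      have : IsIso (T.μ.app X) := inferInstance
      calc T.map (T.η.app X) = T.map (T.η.app X) ≫ T.μ.app X ≫ inv (T.μ.app X) := by simp
        _ = T.η.app (T.obj X) ≫ T.μ.app X ≫ inv (T.μ.app X) := by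
              rw [← Category.assoc, h1, ← Category.assoc, h2]; rfl
        _ = T.η.app (T.obj X) := by simp
    -- every algebra structure map is inverse to η
    have inv_eta : ∀ A : T.Algebra, A.a ≫ T.η.app A.A = 𝟙 _ := by
      intro A
      have := T.η.naturality A.a
      dsimp at this
      calc A.a ≫ T.η.app A.A = T.η.app (T.obj A.A) ≫ T.map A.a := by rw [← this]
        _ = T.map (T.η.app A.A) ≫ T.map A.a := by rw [key]
        _ = T.map (T.η.app A.A ≫ A.a) := by rw [Functor.map_comp]
        _ = 𝟙 _ := by rw [A.unit]; simp
    constructor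
    intro A B f
    change A.A ⟶ B.A at f
    refine ⟨⟨f, ?_⟩, rfl⟩
    calc T.map f ≫ B.a = (A.a ≫ T.η.app A.A) ≫ T.map f ≫ B.a := by rw [inv_eta]; simp
      _ = A.a ≫ (T.η.app A.A ≫ T.map f) ≫ B.a := by simp
      _ = A.a ≫ (f ≫ T.η.app B.A) ≫ B.a := by
            have := T.η.naturality f; dsimp at this; rw [← this]
      _ = A.a ≫ f ≫ (T.η.app B.A ≫ B.a) := by simp
      _ = A.a ≫ f := by rw [B.unit]; simp
  · intro h
    have : ∀ X : 𝔹, IsIso (T.μ.app X) := by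
      intro X
      -- η_{TX} lifts to an algebra morphism (TX, μ_X) ⟶ (TTX, μ_{TX})
      obtain ⟨g, hg⟩ := h.map_surjective
        (X := (Monad.free T).obj X) (Y := (Monad.free T).obj (T.obj X))
        (T.η.app (T.obj X))
      have hcomm := g.h
      change g.f = T.η.app (T.obj X) at hg
      rw [hg] at hcomm
      change T.map (T.η.app (T.obj X)) ≫ T.μ.app (T.obj X) = T.μ.app X ≫ T.η.app (T.obj X) at hcomm
      refine ⟨T.η.app (T.obj X), ?_, T.left_unit X⟩
      rw [← hcomm]
      exact T.right_unit (T.obj X)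
    exact NatIso.isIso_of_isIso_app T.μ
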